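/- Let q be a prime power and n ≥ 1. Let S ⊆ H_n(F_q) be the union, over all direction classes [v] in P^{2n−1}(F_q), of the horizontal lines L_{0,[v]} through the origin 0 = (0, 0, 0). Then |S| = q^{2n}, and for every [v] in P^{2n−1}(F_q) one has M_{Hn} 1_S([v]) ≥ q. Consequently, for every real 1 ≤ v' < ∞, ‖M_{Hn} 1_S‖_{ℓ^{v'}(P^{2n−1}(F_q))} ≥ q^{1 + (2n−1)/v'}. -/

import Mathlib

/-!
`K` plays the role of the finite field `F_q` with `q = Fintype.card K` elements
(the cardinality of a finite field is automatically a prime power).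
The Heisenberg group `H_n(F_q)` is identified with `(Fin n → K) × (Fin n → K) × K`,
and the projective space `P^{2n-1}(F_q)` of horizontal directions with
`Projectivization K ((Fin n → K) × (Fin n → K))`.
-/

noncomputable section

open Finset

/-- Projectivizations of finite modules are finite. -/
noncomputable instance {K V : Type*} [DivisionRing K] [AddCommGroup V] [Module K V]
    [Finite V] : Fintype (Projectivization K V) :=
  have : Finite (Projectivization K V) := Quotient.finite _
  Fintype.ofFinite _

/-- The point of the horizontal line in `H_n(F_q)` through `p = (x₀, y₀, t₀)` with
direction vector `v = (a, b)` corresponding to the parameter `s`, namely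
`(x₀ + s a, y₀ + s b, t₀ + s (x₀ · b - y₀ · a))`. -/
def hPointN {K : Type*} [Field K] (n : ℕ) (p : (Fin n → K) × (Fin n → K) × K)
    (v : (Fin n → K) × (Fin n → K)) (s : K) : (Fin n → K) × (Fin n → K) × K :=
  (p.1 + s • v.1, p.2.1 + s • v.2,
    p.2.2 + s * ((∑ i, p.1 i * v.2 i) - ∑ i, p.2.1 i * v.1 i))

/-- The horizontal Kakeya maximal function `M_{H_n} F` on `P^{2n-1}(F_q)`:
the maximum over all base points `p` of the sum of `|F|` along the horizontal
line through `p` in the given direction class (computed using the chosen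
representative `d.rep`; the value is independent of the representative). -/
def MHn {K : Type*} [Field K] [Fintype K] (n : ℕ)
    (Fc : (Fin n → K) × (Fin n → K) × K → ℂ)
    (d : Projectivization K ((Fin n → K) × (Fin n → K))) : ℝ :=
  Finset.univ.sup' ⟨(0, 0, 0), Finset.mem_univ _⟩
    fun p => ∑ s : K, ‖Fc (hPointN n p d.rep s)‖

/-- `ℓ^r` norm of a real-valued function on a finite set. -/
def lpNormR {X : Type*} [Fintype X] (r : ℝ) (g : X → ℝ) : ℝ :=
  (∑ x, |g x| ^ r) ^ (1 / r)

/-- The union of the horizontal lines through the origin of `H_n(F_q)`, one in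
each horizontal direction class. -/
def SKakN (K : Type*) [Field K] [Fintype K] (n : ℕ) :
    Set ((Fin n → K) × (Fin n → K) × K) :=
  { z | ∃ v : (Fin n → K) × (Fin n → K), v ≠ 0 ∧ ∃ s : K, z = hPointN n (0, 0, 0) v s }

/-- The union `S` of the horizontal lines through the origin of
`H_n(F_q)` has `|S| = q^{2n}`, `M_{H_n} 1_S ≥ q` in every direction of
`P^{2n-1}(F_q)`, and hence
`‖M_{H_n} 1_S‖_{ℓ^{v'}(P^{2n-1}(F_q))} ≥ q^{1 + (2n-1)/v'}` for all `1 ≤ v' < ∞`. -/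
theorem stmt_11 (K : Type*) [Field K] [Fintype K] (n : ℕ) (hn : 1 ≤ n) :
    (SKakN K n).ncard = Fintype.card K ^ (2 * n) ∧
    (∀ d : Projectivization K ((Fin n → K) × (Fin n → K)),
      (Fintype.card K : ℝ) ≤ MHn n ((SKakN K n).indicator fun _ => (1 : ℂ)) d) ∧
    ∀ v' : ℝ, 1 ≤ v' →
      (Fintype.card K : ℝ) ^ ((1 : ℝ) + (2 * (n : ℝ) - 1) / v') ≤
        lpNormR v' (MHn n ((SKakN K n).indicator fun _ => (1 : ℂ))) := by
  set i0 : Fin n := ⟨0, hn⟩ with hi0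
  -- S is the hyperplane {t = 0}
  have hSeq : SKakN K n = {z : (Fin n → K) × (Fin n → K) × K | z.2.2 = 0} := by
    ext z
    simp only [SKakN, Set.mem_setOf_eq]
    constructor
    · rintro ⟨v, hv, s, rfl⟩
      simp [hPointN]
    · intro h
      obtain ⟨x, y, t⟩ := z
      simp only at h
      subst h
      by_cases h0 : (x, y) = (0 : (Fin n → K) × (Fin n → K))
      · refine ⟨((fun _ => 1), 0), ?_, 0, ?_⟩
        · intro hc
          exact one_ne_zero (congrFun (congrArg Prod.fst hc) i0)
        · rw [Prod.mk.injEq] at h0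
          simp [hPointN, h0.1, h0.2]
      · refine ⟨(x, y), h0, 1, ?_⟩
        simp [hPointN]
  -- part 2
  have key : ∀ d : Projectivization K ((Fin n → K) × (Fin n → K)),
      (Fintype.card K : ℝ) ≤ MHn n ((SKakN K n).indicator fun _ => (1 : ℂ)) d := by
    intro d
    have hmem : ∀ s : K, hPointN n ((0,0,0)) d.rep s ∈ SKakN K n :=
      fun s => ⟨d.rep, Projectivization.rep_nonzero d, s, rfl⟩
    have hval : ∑ s : K, ‖
        (((SKakN K n).indicator fun _ => (1:ℂ)) (hPointN n (0,0,0) d.rep s))‖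
        = (Fintype.card K : ℝ) := by
      rw [Finset.sum_congr rfl fun s _ => by rw [Set.indicator_of_mem (hmem s)]]
      simp
    rw [← hval]
    unfold MHn
    exact Finset.le_sup'
      (fun p => ∑ s : K, ‖
        (((SKakN K n).indicator fun _ => (1:ℂ)) (hPointN n p d.rep s))‖)
      (Finset.mem_univ ((0,0,0) : (Fin n → K) × (Fin n → K) × K))
  refine ⟨?_, key, ?_⟩
  · -- cardinality
    rw [hSeq, ← Nat.card_coe_set_eq]
    have e : ↥({z : (Fin n → K) × (Fin n → K) × K | z.2.2 = 0}) ≃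
        ((Fin n → K) × (Fin n → K)) :=
      { toFun := fun z => (z.1.1, z.1.2.1)
        invFun := fun u => ⟨(u.1, u.2, 0), rfl⟩
        left_inv := by
          rintro ⟨⟨x, y, t⟩, h⟩
          simp only [Set.mem_setOf_eq] at h
          subst h
          rfl
        right_inv := fun u => rfl }
    rw [Nat.card_congr e, Nat.card_eq_fintype_card]
    simp [two_mul, pow_add]
  · -- ℓ^r bound
    intro v' hv'
    have hq0 : (0:ℝ) < Fintype.card K := by exact_mod_cast Fintype.card_pos
    have hv0 : (0:ℝ) < v' := lt_of_lt_of_le one_pos hv'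
    set P := Projectivization K ((Fin n → K) × (Fin n → K)) with hP
    -- card P ≥ q^{2n-1}
    have hNnat : Fintype.card K ^ (2 * n - 1) ≤ Fintype.card P := by
      have hinj : Function.Injective (fun u : (Fin n → K) × (Fin n → K) =>
          (u.1 i0, Projectivization.mk K (Function.update u.1 i0 1, u.2)
            (fun hc => one_ne_zero (α := K)
              (by simpa using congrFun (congrArg Prod.fst hc) i0)))) := by
        intro u u' h
        rw [Prod.mk.injEq] at h
        obtain ⟨h1, h2⟩ := h
        rw [Projectivization.mk_eq_mk_iff] at h2
        obtain ⟨a, ha⟩ := h2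
        have ha1 : a • Function.update u'.1 i0 1 = Function.update u.1 i0 1 :=
          congrArg Prod.fst ha
        have ha2 : a • u'.2 = u.2 := congrArg Prod.snd ha
        have haa : (a : K) = 1 := by
          have := congrFun ha1 i0
          simpa [Units.smul_def] using this
        rw [Units.smul_def, haa, one_smul] at ha1 ha2
        have hx : u.1 = u'.1 := by
          funext j
          by_cases hj : j = i0
          · subst hj; exact h1
          · have := congrFun ha1 j
            simpa [Function.update_of_ne hj] using this.symm
        exact Prod.ext hx ha2.symm
      have hle := Fintype.card_le_of_injective _ hinj
      rw [Fintype.card_prod, Fintype.card_prod, Fintype.card_fun, Fintype.card_fin] at hle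
      apply Nat.le_of_mul_le_mul_left ?_ (Fintype.card_pos (α := K))
      calc Fintype.card K * Fintype.card K ^ (2 * n - 1)
          = Fintype.card K ^ (2 * n) := by
            rw [← pow_succ']
            congr 1
            omega
        _ = Fintype.card K ^ n * Fintype.card K ^ n := by rw [two_mul, pow_add]
        _ ≤ Fintype.card K * Fintype.card P := hle
    set g := MHn n ((SKakN K n).indicator fun _ => (1 : ℂ)) with hg
    have hsum : (Fintype.card P : ℝ) * (Fintype.card K : ℝ) ^ v' ≤ ∑ d : P, |g d| ^ v' := by
      calc (Fintype.card P : ℝ) * (Fintype.card K : ℝ) ^ v'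
          = ∑ _d : P, (Fintype.card K : ℝ) ^ v' := by
            rw [Finset.sum_const, Finset.card_univ, nsmul_eq_mul]
        _ ≤ ∑ d : P, |g d| ^ v' := by
            refine Finset.sum_le_sum fun d _ => ?_
            rw [abs_of_nonneg (le_trans hq0.le (key d))]
            exact Real.rpow_le_rpow hq0.le (key d) hv0.le
    have hstep : ((Fintype.card P : ℝ) * (Fintype.card K : ℝ) ^ v') ^ (1/v')
        ≤ lpNormR v' g := by
      unfold lpNormR
      exact Real.rpow_le_rpow (by positivity) hsum (by positivity)
    refine le_trans ?_ hstep
    have hcast : ((2 * n - 1 : ℕ) : ℝ) = 2 * (n : ℝ) - 1 := by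
      rw [Nat.cast_sub (by omega)]
      push_cast
      ring
    have hNcast : (Fintype.card K : ℝ) ^ (((2 * n - 1 : ℕ) : ℝ)) ≤ (Fintype.card P : ℝ) := by
      rw [Real.rpow_natCast]
      exact_mod_cast hNnat
    have h1 : (Fintype.card K : ℝ) ^ (((2 * n - 1 : ℕ) : ℝ) * (1/v'))
        ≤ (Fintype.card P : ℝ) ^ (1/v') := by
      rw [Real.rpow_mul hq0.le]
      exact Real.rpow_le_rpow (by positivity) hNcast (by positivity)
    calc (Fintype.card K : ℝ) ^ ((1:ℝ) + (2 * (n:ℝ) - 1) / v')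
        = (Fintype.card K : ℝ) ^ (1:ℝ) *
            (Fintype.card K : ℝ) ^ ((2 * (n:ℝ) - 1) / v') := Real.rpow_add hq0 _ _
      _ = (Fintype.card K : ℝ) *
            (Fintype.card K : ℝ) ^ (((2 * n - 1 : ℕ) : ℝ) * (1/v')) := by
            rw [Real.rpow_one, hcast, mul_one_div]
      _ ≤ (Fintype.card K : ℝ) * (Fintype.card P : ℝ) ^ (1/v') :=
            mul_le_mul_of_nonneg_left h1 hq0.le
      _ = (Fintype.card P : ℝ) ^ (1/v') * ((Fintype.card K : ℝ) ^ v') ^ (1/v') := by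
            have hqq : ((Fintype.card K : ℝ) ^ v') ^ (1/v') = (Fintype.card K : ℝ) := by
              rw [← Real.rpow_mul hq0.le, mul_one_div, div_self hv0.ne', Real.rpow_one]
            rw [hqq]; ring
      _ = ((Fintype.card P : ℝ) * (Fintype.card K : ℝ) ^ v') ^ (1/v') :=
            (Real.mul_rpow (by positivity) (by positivity)).symm
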